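/- Proposition 2, first formula (averaged modal contribution): if A is Hurwitz, then for each i, trace(Vᴴ P̄_{z i} V) = −Re( trace( R_iᴴ (conj(λ_i)I + A)⁻¹ ) ), where P̄_{z i} := −{ ∑_{j=1}^n ((u_iᴴ u_j)/(conj(λ_i) + λ_j)) e_i e_jᵀ }_H. -/

import Mathlib

open Matrix BigOperators

/-- The residue matrix `R_i = u_i v_iᵀ`, with entries `(R_i)_{kl} = U_{ki} V_{il}`. -/
noncomputable def residue {n : ℕ} (U V : Matrix (Fin n) (Fin n) ℂ) (i : Fin n) :
    Matrix (Fin n) (Fin n) ℂ :=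
  Matrix.vecMulVec (fun k => U k i) (fun l => V i l)

/-- The Hermitian part `{M}_H = ½(M + Mᴴ)` of a square complex matrix. -/
noncomputable def hermPart {n : ℕ} (M : Matrix (Fin n) (Fin n) ℂ) :
    Matrix (Fin n) (Fin n) ℂ :=
  (1 / 2 : ℂ) • (M + Mᴴ)

/-- The modal-contribution matrix
`P̄_{z i} := −{ ∑_j ((u_iᴴ u_j)/(conj(λ_i) + λ_j)) e_i e_jᵀ }_H`. -/
noncomputable def modalContrib {n : ℕ} (U : Matrix (Fin n) (Fin n) ℂ) (lam : Fin n → ℂ)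
    (i : Fin n) : Matrix (Fin n) (Fin n) ℂ :=
  -hermPart (∑ j, Matrix.single i j
    ((∑ k, starRingEnd ℂ (U k i) * U k j) / (starRingEnd ℂ (lam i) + lam j)))

lemma trace_std_aux (n : ℕ) (V : Matrix (Fin n) (Fin n) ℂ) (c : Fin n → ℂ) (i : Fin n) :
    Matrix.trace (Vᴴ * (∑ j, Matrix.single i j (c j)) * V) =
      ∑ d, ∑ a, (starRingEnd ℂ (V i a)) * (c d * V d a) := by
  rw [Matrix.mul_sum, Matrix.sum_mul, Matrix.trace_sum]
  refine Finset.sum_congr rfl fun d _ => ?_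
  simp [Matrix.trace, Matrix.diag, Matrix.mul_apply, Matrix.single,
    Finset.sum_mul, Finset.mul_sum, Matrix.conjTranspose_apply]
  simp [ite_and, Finset.sum_ite_eq, mul_assoc]

lemma trace_res_aux (n : ℕ) (U V : Matrix (Fin n) (Fin n) ℂ) (μ : Fin n → ℂ) (i : Fin n) :
    Matrix.trace ((residue U V i)ᴴ * (U * Matrix.diagonal (fun j => (μ j)⁻¹) * V)) =
      ∑ d, ∑ a, (starRingEnd ℂ (V i a)) *
        (((∑ k, starRingEnd ℂ (U k i) * U k d) / μ d) * V d a) := by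
  simp only [Matrix.trace, Matrix.diag, Matrix.mul_apply, residue, Matrix.vecMulVec_apply,
    Matrix.conjTranspose_apply, Matrix.diagonal_apply, Finset.mul_sum, Finset.sum_mul,
    div_eq_mul_inv]
  simp only [ite_mul, zero_mul, mul_ite, mul_zero, Finset.sum_ite_eq, Finset.sum_ite_eq',
    Finset.mem_univ, if_true]
  conv_rhs => rw [Finset.sum_comm]
  refine Finset.sum_congr rfl fun a _ => ?_
  conv_rhs => rw [Finset.sum_comm]
  refine Finset.sum_congr rfl fun k _ => ?_
  refine Finset.sum_congr rfl fun d _ => ?_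
  simp only [starRingEnd_apply, star_mul']
  ring

/-- Proposition 2, first formula (averaged modal contribution): if `A` is Hurwitz, then for
each `i`, `trace(Vᴴ P̄_{z i} V) = −Re(trace(R_iᴴ (conj(λ_i)I + A)⁻¹))`. -/
theorem averaged_modal_contribution_formula
    (n : ℕ) (hn : 1 ≤ n)
    (A U V : Matrix (Fin n) (Fin n) ℂ) (lam : Fin n → ℂ)
    (hUV : U * V = 1) (hVU : V * U = 1)
    (hA : A = U * Matrix.diagonal lam * V)
    (hHur : ∀ i, (lam i).re < 0)
    (i : Fin n) :
    Matrix.trace (Vᴴ * modalContrib U lam i * V) =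
      -((Matrix.trace ((residue U V i)ᴴ *
          (starRingEnd ℂ (lam i) • (1 : Matrix (Fin n) (Fin n) ℂ) + A)⁻¹)).re : ℂ) := by
  set μ : Fin n → ℂ := fun j => starRingEnd ℂ (lam i) + lam j with hμdef
  have hμ0 : ∀ j, μ j ≠ 0 := by
    intro j h
    have hre : (μ j).re = (lam i).re + (lam j).re := by
      simp [hμdef, Complex.add_re, Complex.conj_re]
    rw [h] at hre
    simp at hre
    linarith [hHur i, hHur j]
  -- the shifted matrix equals U * diagonal μ * V
  have hB : starRingEnd ℂ (lam i) • (1 : Matrix (Fin n) (Fin n) ℂ) + A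
      = U * Matrix.diagonal μ * V := by
    have hdiag : Matrix.diagonal μ
        = starRingEnd ℂ (lam i) • (1 : Matrix (Fin n) (Fin n) ℂ) + Matrix.diagonal lam := by
      ext a b
      by_cases h : a = b <;>
        simp [Matrix.diagonal_apply, h, hμdef, Matrix.one_apply]
    rw [hdiag, hA, Matrix.mul_add, Matrix.add_mul,
      Matrix.mul_smul, Matrix.smul_mul, mul_one, hUV]
  -- its inverse
  have hInv : (starRingEnd ℂ (lam i) • (1 : Matrix (Fin n) (Fin n) ℂ) + A)⁻¹
      = U * Matrix.diagonal (fun j => (μ j)⁻¹) * V := by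
    rw [hB]
    apply Matrix.inv_eq_right_inv
    calc U * Matrix.diagonal μ * V * (U * Matrix.diagonal (fun j => (μ j)⁻¹) * V)
        = U * Matrix.diagonal μ * (V * U) * Matrix.diagonal (fun j => (μ j)⁻¹) * V := by
          noncomm_ring
      _ = U * (Matrix.diagonal μ * Matrix.diagonal (fun j => (μ j)⁻¹)) * V := by
          rw [hVU, Matrix.mul_one]; noncomm_ring
      _ = 1 := by
          rw [Matrix.diagonal_mul_diagonal]
          have : (fun j => μ j * (μ j)⁻¹) = fun _ => (1 : ℂ) := by
            funext j; exact mul_inv_cancel₀ (hμ0 j)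
          rw [this, Matrix.diagonal_one, Matrix.mul_one, hUV]
  -- common value
  set c : Fin n → ℂ := fun j => (∑ k, starRingEnd ℂ (U k i) * U k j) / μ j with hc
  set t : ℂ := ∑ d, ∑ a, (starRingEnd ℂ (V i a)) * (c d * V d a) with ht
  have hM : Matrix.trace (Vᴴ * (∑ j, Matrix.single i j (c j)) * V) = t :=
    trace_std_aux n V c i
  have hR : Matrix.trace ((residue U V i)ᴴ *
      (starRingEnd ℂ (lam i) • (1 : Matrix (Fin n) (Fin n) ℂ) + A)⁻¹) = t := by
    rw [hInv]; exact trace_res_aux n U V μ i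
  rw [hR]
  -- expand the left side
  have hLHS : Matrix.trace (Vᴴ * modalContrib U lam i * V)
      = -((1 / 2 : ℂ) * (t + starRingEnd ℂ t)) := by
    rw [modalContrib, hermPart]
    set M : Matrix (Fin n) (Fin n) ℂ := ∑ j, Matrix.single i j (c j) with hMdef
    have h1 : Vᴴ * -((1 / 2 : ℂ) • (M + Mᴴ)) * V
        = -((1 / 2 : ℂ) • (Vᴴ * M * V + Vᴴ * Mᴴ * V)) := by
      rw [Matrix.mul_neg, Matrix.neg_mul, Matrix.mul_smul, Matrix.smul_mul,
        Matrix.mul_add, Matrix.add_mul]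
    rw [h1, Matrix.trace_neg, Matrix.trace_smul, Matrix.trace_add]
    have h2 : Matrix.trace (Vᴴ * Mᴴ * V) = starRingEnd ℂ (Matrix.trace (Vᴴ * M * V)) := by
      rw [starRingEnd_apply, ← Matrix.trace_conjTranspose]
      congr 1
      rw [Matrix.conjTranspose_mul, Matrix.conjTranspose_mul, Matrix.conjTranspose_conjTranspose]
      noncomm_ring
    rw [h2, hM]
    simp [smul_eq_mul]
  rw [hLHS]
  have h2re : t + starRingEnd ℂ t = 2 * (t.re : ℂ) := by
    rw [Complex.add_conj]; push_cast; ring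
  rw [h2re]
  ring
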